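/- For t ∈ [0, π/4], let c_± = (1/2)√(1 ± √2 sin t) and |ψ⟩ = c₋(|010⟩ + |011⟩) + c₊(|100⟩ + |101⟩) ∈ ℂ²⊗ℂ²⊗ℂ². Then |ψ⟩ is a unit vector, and there exist ±1-observables A₁, A₂, B₁, B₂, C₁, C₂ on the respective qubits such that ⟨𝓑_AB⟩ = 2√2 cos t and ⟨𝓑_AC⟩ = 2√2 sin t; in particular ⟨𝓑_AB⟩² + ⟨𝓑_AC⟩² = 8, so the monogamy bound is tight. -/

import Mathlib

open Matrix Kronecker
set_option maxHeartbeats 2000000 in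

theorem monogamy_tight (t : ℝ) (ht : t ∈ Set.Icc 0 (Real.pi / 4))
    (cm cp : ℝ)
    (hcm : cm = (1 / 2) * Real.sqrt (1 - Real.sqrt 2 * Real.sin t))
    (hcp : cp = (1 / 2) * Real.sqrt (1 + Real.sqrt 2 * Real.sin t))
    (ψ : Fin 2 × Fin 2 × Fin 2 → ℂ)
    (hψ : ψ = fun p =>
      if p.1 = 0 ∧ p.2.1 = 1 then (cm : ℂ)
      else if p.1 = 1 ∧ p.2.1 = 0 then (cp : ℂ) else 0) :
    star ψ ⬝ᵥ ψ = 1 ∧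
    ∃ A₁ A₂ B₁ B₂ C₁ C₂ : Matrix (Fin 2) (Fin 2) ℂ,
      A₁.IsHermitian ∧ A₂.IsHermitian ∧ B₁.IsHermitian ∧ B₂.IsHermitian ∧
      C₁.IsHermitian ∧ C₂.IsHermitian ∧
      A₁ * A₁ = 1 ∧ A₂ * A₂ = 1 ∧ B₁ * B₁ = 1 ∧ B₂ * B₂ = 1 ∧
      C₁ * C₁ = 1 ∧ C₂ * C₂ = 1 ∧
      (star ψ ⬝ᵥ ((A₁ ⊗ₖ ((B₁ + B₂) ⊗ₖ (1 : Matrix (Fin 2) (Fin 2) ℂ)) +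
                   A₂ ⊗ₖ ((B₁ - B₂) ⊗ₖ (1 : Matrix (Fin 2) (Fin 2) ℂ))) *ᵥ ψ)).re =
        2 * Real.sqrt 2 * Real.cos t ∧
      (star ψ ⬝ᵥ ((A₁ ⊗ₖ ((1 : Matrix (Fin 2) (Fin 2) ℂ) ⊗ₖ (C₁ + C₂)) +
                   A₂ ⊗ₖ ((1 : Matrix (Fin 2) (Fin 2) ℂ) ⊗ₖ (C₁ - C₂))) *ᵥ ψ)).re =
        2 * Real.sqrt 2 * Real.sin t ∧
      (2 * Real.sqrt 2 * Real.cos t) ^ 2 + (2 * Real.sqrt 2 * Real.sin t) ^ 2 = 8 := by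
  obtain ⟨ht0, ht1⟩ := ht
  have hπ : (0:ℝ) < Real.pi := Real.pi_pos
  have hsqrt2 : Real.sqrt 2 ^ 2 = 2 := Real.sq_sqrt (by norm_num)
  have hsqrt2' : (0:ℝ) < Real.sqrt 2 := Real.sqrt_pos.2 (by norm_num)
  -- sin t ≤ √2/2
  have hsin_le : Real.sin t ≤ Real.sqrt 2 / 2 := by
    have := Real.sin_le_sin_of_le_of_le_pi_div_two (by linarith) (by linarith) ht1
    rwa [Real.sin_pi_div_four] at this
  have hsin0 : 0 ≤ Real.sin t := Real.sin_nonneg_of_nonneg_of_le_pi ht0 (by linarith)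
  have hs2 : Real.sqrt 2 * Real.sin t ≤ 1 := by nlinarith
  have hcos_ge : Real.sqrt 2 / 2 ≤ Real.cos t := by
    have := Real.cos_le_cos_of_nonneg_of_le_pi (by linarith) (by linarith) ht1
    rwa [Real.cos_pi_div_four] at this
  have hcos0 : (0:ℝ) < Real.cos t := by nlinarith
  set ct := Real.cos t with hct
  set st := Real.sin t with hst
  have hpyth : st ^ 2 + ct ^ 2 = 1 := Real.sin_sq_add_cos_sq t
  have hcm2 : cm ^ 2 = (1 - Real.sqrt 2 * st) / 4 := by
    rw [hcm, mul_pow, Real.sq_sqrt (by linarith)]; ring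
  have hcp2 : cp ^ 2 = (1 + Real.sqrt 2 * st) / 4 := by
    rw [hcp, mul_pow, Real.sq_sqrt (by positivity)]; ring
  set w := Real.sqrt (2 * ct ^ 2 - 1) with hwdef
  have hw2 : w ^ 2 = 2 * ct ^ 2 - 1 := Real.sq_sqrt (by nlinarith)
  have hw0 : 0 ≤ w := Real.sqrt_nonneg _
  have hcmcp : cm * cp = w / 4 := by
    rw [hcm, hcp, hwdef]
    rw [show (1/2) * Real.sqrt (1 - Real.sqrt 2 * st) * ((1/2) * Real.sqrt (1 + Real.sqrt 2 * st))
        = Real.sqrt (1 - Real.sqrt 2 * st) * Real.sqrt (1 + Real.sqrt 2 * st) / 4 by ring,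
      ← Real.sqrt_mul (by linarith)]
    congr 2
    nlinarith
  constructor
  · -- norm
    subst hψ
    simp [dotProduct, Fintype.sum_prod_type, Fin.sum_univ_two]
    have : (cm:ℂ)^2 * 2 + (cp:ℂ)^2 * 2 = 1 := by
      have : cm ^ 2 * 2 + cp ^ 2 * 2 = 1 := by rw [hcm2, hcp2]; ring
      exact_mod_cast this
    linear_combination this
  · set u : ℝ := -1 / (Real.sqrt 2 * ct) with hu
    set v : ℝ := w / (Real.sqrt 2 * ct) with hv
    have hden : Real.sqrt 2 * ct ≠ 0 := by positivity
    have huv : u ^ 2 + v ^ 2 = 1 := by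
      rw [hu, hv]
      field_simp
      nlinarith
    have huvC : (u:ℂ) ^ 2 + (v:ℂ) ^ 2 = 1 := by exact_mod_cast congrArg (Complex.ofReal) huv
    refine ⟨!![1,0;0,-1], !![0,1;1,0], !![(u:ℂ), v; v, -u], !![(u:ℂ), -v; -v, -u],
      !![0,-1;-1,0], !![0,-1;-1,0], ?_, ?_, ?_, ?_, ?_, ?_, ?_, ?_, ?_, ?_, ?_, ?_, ?_, ?_, ?_⟩
    · ext i j; fin_cases i <;> fin_cases j <;> simp [Matrix.conjTranspose_apply]
    · ext i j; fin_cases i <;> fin_cases j <;> simp [Matrix.conjTranspose_apply]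
    · ext i j; fin_cases i <;> fin_cases j <;> simp [Matrix.conjTranspose_apply]
    · ext i j; fin_cases i <;> fin_cases j <;> simp [Matrix.conjTranspose_apply]
    · ext i j; fin_cases i <;> fin_cases j <;> simp [Matrix.conjTranspose_apply]
    · ext i j; fin_cases i <;> fin_cases j <;> simp [Matrix.conjTranspose_apply]
    · ext i j; fin_cases i <;> fin_cases j <;>
        simp [Matrix.mul_apply, Fin.sum_univ_two, Matrix.one_apply]
    · ext i j; fin_cases i <;> fin_cases j <;>
        simp [Matrix.mul_apply, Fin.sum_univ_two, Matrix.one_apply]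
    · ext i j; fin_cases i <;> fin_cases j <;>
        simp [Matrix.mul_apply, Fin.sum_univ_two, Matrix.one_apply] <;>
        norm_cast <;> nlinarith [huv]
    · ext i j; fin_cases i <;> fin_cases j <;>
        simp [Matrix.mul_apply, Fin.sum_univ_two, Matrix.one_apply] <;>
        norm_cast <;> nlinarith [huv]
    · ext i j; fin_cases i <;> fin_cases j <;>
        simp [Matrix.mul_apply, Fin.sum_univ_two, Matrix.one_apply]
    · ext i j; fin_cases i <;> fin_cases j <;>
        simp [Matrix.mul_apply, Fin.sum_univ_two, Matrix.one_apply]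
    · -- AB CHSH
      subst hψ
      simp [dotProduct, Matrix.mulVec, Fintype.sum_prod_type, Fin.sum_univ_two,
        Matrix.kroneckerMap_apply, Matrix.one_apply]
      have h1 : cm ^ 2 + cp ^ 2 = 1 / 2 := by rw [hcm2, hcp2]; ring
      have key : -4*u*(cm^2+cp^2) + 8*v*(cm*cp) = 2 * Real.sqrt 2 * ct := by
        rw [h1, hcmcp, hu, hv]
        have h2 : Real.sqrt 2 ≠ 0 := by positivity
        field_simp
        linear_combination 16*hw2 - 16*ct^2*hsqrt2
      linear_combination key
    · -- AC CHSH
      subst hψ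
      simp [dotProduct, Matrix.mulVec, Fintype.sum_prod_type, Fin.sum_univ_two,
        Matrix.kroneckerMap_apply, Matrix.one_apply]
      linear_combination 4*hcp2 - 4*hcm2
    · have : ct ^ 2 + st ^ 2 = 1 := by linarith
      nlinarith
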